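/- Let G = ⟨s₁,…,s_r⟩ be the free group of rank r, let ({P^s}_{s∈S}, π) be an invariant transition system with state space K, and let μ be a Borel probability measure on K^G induced by this transition system. Let F ⊂ G be a finite left-connected set containing the identity id, let z : F → K, and let C = {x ∈ K^G : x(g) = z(g) for all g ∈ F} be the corresponding cylinder set. Let E(F) be the set of edges e of the left Cayley graph with both endpoints in F, directed from the endpoint e₋ closer to the identity to the other endpoint e₊, and for e ∈ E(F) with e₊ = s e₋ (s ∈ S) set p_z(e) = P^s_{z(e₋),z(e₊)}. Then μ(C) = π_{z(id)} · ∏_{e∈E(F)} p_z(e). -/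

import Mathlib

open MeasureTheory Filter
open scoped ENNReal symmDiff

namespace Bowen

noncomputable section

/-- The free group of rank `r`. -/
abbrev FG (r : ℕ) := FreeGroup (Fin r)

/-- The generating set element corresponding to `(i, b)`: `sᵢ` if `b = true`,
`sᵢ⁻¹` if `b = false`. -/
def gen {r : ℕ} (s : Fin r × Bool) : FG r :=
  cond s.2 (FreeGroup.of s.1) (FreeGroup.of s.1)⁻¹

/-- The symmetric generating set `S = {s₁^{±1},…,s_r^{±1}}`. -/
def Sset (r : ℕ) : Set (FG r) := Set.range (gen (r := r))

/-- The ball of radius `n` about the identity in the word metric of `(G,S)`. -/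
def ball (r n : ℕ) : Set (FG r) := {g | FreeGroup.norm g ≤ n}

section Partitions

variable {X : Type*} [mX : MeasurableSpace X] {K L : Type*}

/-- Shannon entropy of the countable labeled partition `p` with respect to `μ`
(in `ℝ≥0∞`, so that `H(p) < ∞` is meaningful). -/
def Hpart (μ : Measure X) (p : X → K) : ℝ≥0∞ :=
  ∑' k : K, ENNReal.ofReal (Real.negMulLog ((μ (p ⁻¹' {k})).toReal))

/-- The atom of the partition `p` containing `x`. -/
def atomOf (p : X → K) (x : X) : Set X := p ⁻¹' {p x}

/-- Conditional Shannon entropy of `p` given the sub-σ-algebra `m`: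
`H(p|m) = ∫ -log( μ(A_x | m)(x) ) dμ(x)`. -/
def HpartC (μ : Measure X) (p : X → K) (m : MeasurableSpace X) : ℝ≥0∞ :=
  ∫⁻ x, ENNReal.ofReal
    (- Real.log ((μ[(atomOf p x).indicator (fun _ => (1:ℝ)) | m]) x)) ∂μ

/-- Join of two labeled partitions. -/
def pjoin (p : X → K) (q : X → L) : X → K × L := fun x => (p x, q x)

/-- Pullback partition `T_g^{-1} p`. -/
def pull {r : ℕ} (T : FG r → X → X) (g : FG r) (p : X → K) : X → K :=
  fun x => p (T g x)

/-- The join `⋁_{q ∈ Q} T_q^{-1} p` over a set `Q ⊆ G`. -/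
def powS {r : ℕ} (T : FG r → X → X) (p : X → K) (Q : Set (FG r)) : X → (Q → K) :=
  fun x q => p (T (q : FG r) x)

/-- The join `p^n = ⋁_{g ∈ B(e,n)} T_g^{-1} p`. -/
def pow {r : ℕ} (T : FG r → X → X) (p : X → K) (n : ℕ) : X → (ball r n → K) :=
  powS T p (ball r n)

/-- The σ-algebra generated by the partition `p`. -/
def sAlg (p : X → K) : MeasurableSpace X := MeasurableSpace.comap p ⊤

/-- The smallest `G`-invariant σ-algebra containing the partition `p`. -/
def sAlgG {r : ℕ} (T : FG r → X → X) (p : X → K) : MeasurableSpace X :=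
  ⨆ g : FG r, sAlg (pull T g p)

/-- The σ-algebra `⋁_{f ∈ Q} T_f^{-1} p` for a (possibly infinite) `Q ⊆ G`. -/
def sAlgSet {r : ℕ} (T : FG r → X → X) (p : X → K) (Q : Set (FG r)) :
    MeasurableSpace X :=
  ⨆ f ∈ Q, sAlg (pull T f p)

/-- `F(T,α) = (1−2r)H(α) + ∑ᵢ H(α ∨ T_{sᵢ}^{-1}α)`. -/
def FF {r : ℕ} (T : FG r → X → X) (μ : Measure X) (p : X → K) : ℝ :=
  (1 - 2 * (r : ℝ)) * (Hpart μ p).toReal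
    + ∑ i : Fin r, (Hpart μ (pjoin p (pull T (FreeGroup.of i) p))).toReal

/-- `f(T,α) = inf_{n>0} F(T,α^n)`, as an extended real. -/
def littleF {r : ℕ} (T : FG r → X → X) (μ : Measure X) (p : X → K) : EReal :=
  ⨅ n : ℕ, ((FF T μ (pow T p (n + 1)) : ℝ) : EReal)

/-- Conditional version `F(T,α|𝓕) = (1−2r)H(α|𝓕) + ∑ᵢ H(α ∨ T_{sᵢ}^{-1}α|𝓕)`. -/
def FFc {r : ℕ} (T : FG r → X → X) (μ : Measure X) (m : MeasurableSpace X)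
    (p : X → K) : ℝ :=
  (1 - 2 * (r : ℝ)) * (HpartC (mX := mX) μ p m).toReal
    + ∑ i : Fin r, (HpartC (mX := mX) μ (pjoin p (pull T (FreeGroup.of i) p)) m).toReal

/-- Conditional `f(T,α|𝓕) = inf_{n>0} F(T,α^n|𝓕)`. -/
def littleFc {r : ℕ} (T : FG r → X → X) (μ : Measure X) (m : MeasurableSpace X)
    (p : X → K) : EReal :=
  ⨅ n : ℕ, ((FFc (mX := mX) T μ m (pow T p (n + 1)) : ℝ) : EReal)

/-- The mean entropy `h(T_s, α) = lim_n H(⋁_{i=0}^n T_s^{-i}α)/(n+1)`; since the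
sequence is subadditive the limit equals the infimum, which we take as the
definition. -/
def hrate {r : ℕ} (T : FG r → X → X) (μ : Measure X) (s : FG r) (p : X → K) : ℝ :=
  ⨅ n : ℕ, (Hpart μ (fun x (i : Fin (n + 1)) => p (T (s ^ (i : ℕ)) x))).toReal / (n + 1)

/-- Conditional mean entropy `h(T_s, α|𝓕) = lim_n H(⋁_{i=0}^n T_s^{-i}α | 𝓕)/(n+1)`;
for an invariant `𝓕` the sequence is subadditive so the limit equals the infimum. -/
def hrateC {r : ℕ} (T : FG r → X → X) (μ : Measure X) (m : MeasurableSpace X)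
    (s : FG r) (p : X → K) : ℝ :=
  ⨅ n : ℕ, (HpartC (mX := mX) μ (fun x (i : Fin (n + 1)) => p (T (s ^ (i : ℕ)) x)) m).toReal / (n + 1)

/-- `F_*(T,α) = (1−r)H(α) + ∑ᵢ h(T_{sᵢ},α)`. -/
def Fstar {r : ℕ} (T : FG r → X → X) (μ : Measure X) (p : X → K) : ℝ :=
  (1 - (r : ℝ)) * (Hpart μ p).toReal + ∑ i : Fin r, hrate T μ (FreeGroup.of i) p

/-- `f_*(T,α) = inf_{n>0} F_*(T,α^n)`. -/
def fstar {r : ℕ} (T : FG r → X → X) (μ : Measure X) (p : X → K) : EReal :=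
  ⨅ n : ℕ, ((Fstar T μ (pow T p (n + 1)) : ℝ) : EReal)

/-- `F_*(T,α|𝓕) = (1−r)H(α|𝓕) + ∑ᵢ h(T_{sᵢ},α|𝓕)`. -/
def FstarC {r : ℕ} (T : FG r → X → X) (μ : Measure X) (m : MeasurableSpace X)
    (p : X → K) : ℝ :=
  (1 - (r : ℝ)) * (HpartC (mX := mX) μ p m).toReal + ∑ i : Fin r, hrateC (mX := mX) T μ m (FreeGroup.of i) p

/-- `f_*(T,α|𝓕) = inf_{n>0} F_*(T,α^n|𝓕)`. -/
def fstarC {r : ℕ} (T : FG r → X → X) (μ : Measure X) (m : MeasurableSpace X)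
    (p : X → K) : EReal :=
  ⨅ n : ℕ, ((FstarC (mX := mX) T μ m (pow T p (n + 1)) : ℝ) : EReal)

/-- `p` refines `q`: each atom of `p` is contained, up to a `μ`-null set,
in an atom of `q`. -/
def Refines (μ : Measure X) (p : X → K) (q : X → L) : Prop :=
  ∀ k : K, ∃ l : L, μ (p ⁻¹' {k} \ q ⁻¹' {l}) = 0

/-- Two labeled partitions are equal as partitions (up to null sets). -/
def PartEquiv (μ : Measure X) (p : X → K) (q : X → L) : Prop :=
  Refines μ p q ∧ Refines μ q p

/-- `σ` is a simple splitting of `p`: `σ = p ∨ T_s^{-1}β` for some `s ∈ S` and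
some coarsening `β` of `p`. -/
def SimpleSplit {r : ℕ} (μ : Measure X) (T : FG r → X → X) (p σ : X → ℕ) : Prop :=
  ∃ s ∈ Sset r, ∃ β : X → ℕ, Measurable β ∧ Refines μ p β ∧
    PartEquiv μ σ (pjoin p (pull T s β))

/-- `τ` is a splitting of `p`: obtained from `p` by a finite sequence of simple
splittings (as a partition, i.e. up to relabeling and null sets). -/
def IsSplitting {r : ℕ} (μ : Measure X) (T : FG r → X → X) (p : X → ℕ)
    (τ : X → K) : Prop :=
  ∃ σ : X → ℕ, Relation.ReflTransGen (SimpleSplit μ T) p σ ∧ PartEquiv μ σ τ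

/-- A partition is generating if the smallest `G`-invariant σ-algebra containing it
is the full σ-algebra up to `μ`-null sets. -/
def Generating {r : ℕ} (T : FG r → X → X) (μ : Measure X) (p : X → K) : Prop :=
  ∀ A : Set X, MeasurableSet A →
    ∃ A' : Set X, MeasurableSet[sAlgG T p] A' ∧ μ (A ∆ A') = 0

/-- The Rohlin distance `d(α,β) = H(α|β) + H(β|α)`. -/
def rohlinDist (μ : Measure X) (p : X → K) (q : X → L) : ℝ :=
  (HpartC μ p (sAlg q)).toReal + (HpartC μ q (sAlg p)).toReal

end Partitions

/-- Adjacency in the left Cayley graph `Γ_L`: an edge joins `a` and `sa`, `s ∈ S`. -/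
def adjL {r : ℕ} (a b : FG r) : Prop := ∃ s ∈ Sset r, b = s * a

/-- `Past(g₁;g₂)`: the set of `f ∈ G` such that every path in the left Cayley
graph from `f` to `g₁` passes through `g₂`. -/
def Past {r : ℕ} (g₁ g₂ : FG r) : Set (FG r) :=
  {f | ∀ l : List (FG r), l ≠ [] → l.head? = some f → l.getLast? = some g₁ →
        l.Chain' adjL → g₂ ∈ l}

/-- A subset `F ⊆ G` is right-connected: the subgraph of the right Cayley graph
induced on `F` is connected. -/
def RightConnected {r : ℕ} (F : Set (FG r)) : Prop :=
  ∀ g ∈ F, ∀ h ∈ F,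
    Relation.ReflTransGen (fun a b => a ∈ F ∧ b ∈ F ∧ ∃ s ∈ Sset r, b = a * s) g h

/-- A subset `F ⊆ G` is left-connected: the subgraph of the left Cayley graph
induced on `F` is connected. -/
def LeftConnected {r : ℕ} (F : Set (FG r)) : Prop :=
  ∀ g ∈ F, ∀ h ∈ F,
    Relation.ReflTransGen (fun a b => a ∈ F ∧ b ∈ F ∧ ∃ s ∈ Sset r, b = s * a) g h

section Markov

variable {X : Type*} [MeasurableSpace X] {K : Type*}

/-- A `G`-process `(T,X,μ,α)` is Markov: for every `s ∈ S`, `g ∈ G` and every atom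
`A` of `α`, `μ(T_{sg}^{-1}A | ⋁_{f∈Past(sg;g)} T_f^{-1}α) = μ(T_{sg}^{-1}A | T_g^{-1}α)`
almost everywhere. -/
def IsMarkov {r : ℕ} (μ : Measure X) (T : FG r → X → X) (p : X → K) : Prop :=
  ∀ s ∈ Sset r, ∀ g : FG r, ∀ k : K,
    (μ[((pull T (s * g) p) ⁻¹' {k}).indicator (fun _ => (1:ℝ)) |
        sAlgSet T p (Past (s * g) g)])
      =ᵐ[μ]
    (μ[((pull T (s * g) p) ⁻¹' {k}).indicator (fun _ => (1:ℝ)) |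
        sAlg (pull T g p)])

end Markov


section ExtraDefs

/-- The distance `d₁` between two ordered processes:
`∑_{s∈S} ∑_{i,j} |μ(A_i ∩ T_s^{-1}A_j) − ν(B_i ∩ U_s^{-1}B_j)|`. -/
def d1 {X Y : Type*} [MeasurableSpace X] [MeasurableSpace Y] {r : ℕ}
    (T : FG r → X → X) (μ : Measure X) (α : X → ℕ)
    (U : FG r → Y → Y) (ν : Measure Y) (β : Y → ℕ) : ℝ :=
  ∑ i : Fin r, ∑ b : Bool,
    ∑' ij : ℕ × ℕ,
      |(μ (α ⁻¹' {ij.1} ∩ pull T (gen (i, b)) α ⁻¹' {ij.2})).toReal -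
        (ν (β ⁻¹' {ij.1} ∩ pull U (gen (i, b)) β ⁻¹' {ij.2})).toReal|

/-- Isomorphism of ordered processes: a measure conjugacy between conull sets
intertwining the actions and carrying the `i`-th atom to the `i`-th atom. -/
def OrderedIso {X Y : Type*} [MeasurableSpace X] [MeasurableSpace Y] {r : ℕ}
    (T : FG r → X → X) (μ : Measure X) (α : X → ℕ)
    (U : FG r → Y → Y) (ν : Measure Y) (β : Y → ℕ) : Prop :=
  ∃ (X' : Set X) (Y' : Set Y) (φ : X → Y) (ψ : Y → X),
    MeasurableSet X' ∧ MeasurableSet Y' ∧ μ X'ᶜ = 0 ∧ ν Y'ᶜ = 0 ∧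
    Measurable φ ∧ Measurable ψ ∧ Set.MapsTo φ X' Y' ∧ Set.MapsTo ψ Y' X' ∧
    (∀ x ∈ X', ψ (φ x) = x) ∧ (∀ y ∈ Y', φ (ψ y) = y) ∧
    Measure.map φ μ = ν ∧
    (∀ (g : FG r), ∀ x ∈ X', φ (T g x) = U g (φ x)) ∧
    (∀ x ∈ X', β (φ x) = α x)

/-- A transition system for `(G,S)`: a family of `K × K` matrices indexed by the
generating set together with a row vector, written as functions. -/
structure TransSys (r : ℕ) (K : Type*) where
  P : Fin r × Bool → K → K → ℝ
  pi : K → ℝ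

/-- The transition system is an invariant transition system: the `P^s` are
stochastic matrices, `π` is a probability vector which is a steady state vector
for every `P^s`, and `π_i P^{s^{-1}}_{ij} = π_j P^s_{ji}`. -/
def TransSys.IsInvariant {r : ℕ} {K : Type*} (ts : TransSys r K) : Prop :=
  (∀ s i j, 0 ≤ ts.P s i j) ∧ (∀ s i, HasSum (ts.P s i) 1) ∧
    (∀ i, 0 ≤ ts.pi i) ∧ HasSum ts.pi 1 ∧
    (∀ s j, HasSum (fun i => ts.pi i * ts.P s i j) (ts.pi j)) ∧
    (∀ s i j, ts.pi i * ts.P (s.1, !s.2) i j = ts.pi j * ts.P s j i)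

/-- The canonical (shift) action of `G` on `K^G`: `(T_g x)(f) = x(fg)`. -/
def shiftT {r : ℕ} {K : Type*} : FG r → (FG r → K) → (FG r → K) :=
  fun g x f => x (f * g)

/-- `μ` is (a measure) induced by the transition system `ts`: the time-`e`
distribution is `π` and the transition probabilities into the complement of the
past are given by the matrices `P^s`.  (Note `T_g^{-1}A_k = {x : x(g) = k}`;
the conditional equalities `μ(A|B) = c` are recorded in the equivalent product
form `μ(A ∩ B) = c·μ(B)`.) -/
def IsInducedBy {r : ℕ} {K : Type*} [MeasurableSpace K]
    (μ : Measure (FG r → K)) (ts : TransSys r K) : Prop :=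
  (∀ k : K, μ {x | x 1 = k} = ENNReal.ofReal (ts.pi k)) ∧
  ∀ (s : Fin r × Bool) (g : FG r),
    FreeGroup.norm (gen s * g) = FreeGroup.norm g + 1 →
    ∀ (n : ℕ) (fs : Fin n → FG r) (ks : Fin n → K) (k₀ k : K),
      (∀ i, fs i ∈ Past (gen s * g) g ∧ fs i ≠ g) →
      (μ ({x | x (gen s * g) = k} ∩ ({x | x g = k₀} ∩ ⋂ i, {x | x (fs i) = ks i}))
          = ENNReal.ofReal (ts.P s k₀ k) * μ ({x | x g = k₀} ∩ ⋂ i, {x | x (fs i) = ks i})) ∧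
      μ ({x | x (gen s * g) = k} ∩ {x | x g = k₀})
          = ENNReal.ofReal (ts.P s k₀ k) * μ {x | x g = k₀}

end ExtraDefs

section CylinderAux

open FreeGroup List

variable {r : ℕ}

/-- inverse of a letter -/
def invL {r : ℕ} (s : Fin r × Bool) : Fin r × Bool := (s.1, !s.2)

@[simp] lemma invL_invL (s : Fin r × Bool) : invL (invL s) = s := by
  simp [invL]

lemma gen_eq_mk (s : Fin r × Bool) : gen s = FreeGroup.mk [s] := by
  rcases s with ⟨i, b⟩
  cases b <;> simp [gen, FreeGroup.of, FreeGroup.inv_mk, FreeGroup.invRev]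

lemma gen_inv (s : Fin r × Bool) : (gen s)⁻¹ = gen (invL s) := by
  rw [gen_eq_mk, gen_eq_mk, FreeGroup.inv_mk]
  simp [FreeGroup.invRev, invL]

lemma toWord_gen (s : Fin r × Bool) : (gen s).toWord = [s] := by
  rw [gen_eq_mk, FreeGroup.toWord_mk, FreeGroup.reduce_singleton]

lemma gen_injective : Function.Injective (gen (r := r)) := by
  intro p q h
  have := congrArg FreeGroup.toWord h
  simpa [toWord_gen] using this

def Reduced (l : List (Fin r × Bool)) : Prop :=
  List.Chain' (fun a b => ¬(a.1 = b.1 ∧ a.2 = !b.2)) l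

theorem reduce_chain' (l : List (Fin r × Bool)) : Reduced (reduce l) := by
  induction l with
  | nil => simp [Reduced, List.Chain']
  | cons a t ih =>
    rw [FreeGroup.reduce.cons]
    rcases h : reduce t with _ | ⟨b, t2⟩
    · simp [Reduced, List.Chain']
    · rw [h] at ih
      by_cases hc : a.1 = b.1 ∧ a.2 = !b.2
      · simpa [hc, Reduced, List.Chain'] using ih.tail
      · simp only [hc, if_false]
        exact List.IsChain.cons_cons hc ih

theorem reduce_eq_self {l : List (Fin r × Bool)} (h : Reduced l) : reduce l = l := by
  induction l with
  | nil => rfl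
  | cons a t ih =>
    rw [FreeGroup.reduce.cons, ih h.tail]
    rcases t with _ | ⟨b, t2⟩
    · rfl
    · have hc := (List.isChain_cons_cons.1 h).1
      simp [hc]

lemma toWord_reduced (x : FG r) : Reduced x.toWord := by
  have := reduce_chain' x.toWord
  rwa [FreeGroup.reduce_toWord] at this

lemma toWord_mk_of_reduced {l : List (Fin r × Bool)} (h : Reduced l) :
    (FreeGroup.mk l).toWord = l := by
  rw [FreeGroup.toWord_mk, reduce_eq_self h]


/-- Left-multiplication by a generator: cancellation case. -/
lemma gen_mul_toWord_cancel {s : Fin r × Bool} {x : FG r}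
    (h : x.toWord.head? = some (invL s)) :
    (gen s * x).toWord = x.toWord.tail := by
  rcases hw : x.toWord with _ | ⟨a, t⟩
  · rw [hw] at h; simp at h
  · rw [hw] at h
    have ha : a = invL s := by
      simp only [List.head?_cons, Option.some.injEq] at h
      exact h
    have hx : x = gen (invL s) * FreeGroup.mk t := by
      rw [gen_eq_mk, FreeGroup.mul_mk]
      conv_lhs => rw [← FreeGroup.mk_toWord (x := x)]
      rw [hw, ha]
      rfl
    have : gen s * x = FreeGroup.mk t := by
      rw [hx, ← mul_assoc, ← gen_inv, mul_inv_cancel, one_mul]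
    have hred := toWord_reduced x
    rw [hw] at hred
    rw [this]
    exact toWord_mk_of_reduced hred.tail

/-- Left-multiplication by a generator: no-cancellation case. -/
lemma gen_mul_toWord_cons {s : Fin r × Bool} {x : FG r}
    (h : x.toWord.head? ≠ some (invL s)) :
    (gen s * x).toWord = s :: x.toWord := by
  have hx : gen s * x = FreeGroup.mk (s :: x.toWord) := by
    conv_lhs => rw [← FreeGroup.mk_toWord (x := x)]
    rw [gen_eq_mk, FreeGroup.mul_mk]
    rfl
  rw [hx, toWord_mk_of_reduced]
  have hred := toWord_reduced x
  rcases hw : x.toWord with _ | ⟨a, t⟩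
  · simp [Reduced, List.Chain']
  · rw [hw] at h hred
    refine List.isChain_cons_cons.2 ⟨?_, hred⟩
    rintro ⟨h1, h2⟩
    apply h
    have : a = invL s := by
      rcases a with ⟨a1, a2⟩
      simp only [invL, Prod.mk.injEq]
      refine ⟨h1.symm, ?_⟩
      simp only at h2
      rw [h2]; simp
    rw [this]
    simp

lemma norm_eq_length (x : FG r) : x.norm = x.toWord.length := rfl

lemma norm_gen_mul_cancel {s : Fin r × Bool} {x : FG r}
    (h : x.toWord.head? = some (invL s)) :
    (gen s * x).norm + 1 = x.norm := by
  rcases hw : x.toWord with _ | ⟨a, t⟩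
  · rw [hw] at h; simp at h
  · rw [norm_eq_length, norm_eq_length, gen_mul_toWord_cancel h, hw]
    simp

lemma norm_gen_mul_cons {s : Fin r × Bool} {x : FG r}
    (h : x.toWord.head? ≠ some (invL s)) :
    (gen s * x).norm = x.norm + 1 := by
  rw [norm_eq_length, norm_eq_length, gen_mul_toWord_cons h]
  simp

lemma head?_toWord_inv (x : FG r) :
    x⁻¹.toWord.head? = Option.map invL x.toWord.getLast? := by
  rw [FreeGroup.toWord_inv, FreeGroup.invRev]
  rw [List.head?_reverse, List.getLast?_map]
  rfl

/-- Right multiplication by a generator: cancellation case. -/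
lemma mul_gen_toWord_cancel {s : Fin r × Bool} {x : FG r}
    (h : x.toWord.getLast? = some (invL s)) :
    (x * gen s).toWord = x.toWord.dropLast := by
  have hkey : x * gen s = (gen (invL s) * x⁻¹)⁻¹ := by
    rw [mul_inv_rev, inv_inv, ← gen_inv, inv_inv]
  have hc : x⁻¹.toWord.head? = some (invL (invL s)) := by
    rw [head?_toWord_inv, h]; rfl
  rw [hkey, FreeGroup.toWord_inv, gen_mul_toWord_cancel hc, FreeGroup.toWord_inv]
  -- (invRev x.toWord).tail = invRev (x.toWord.dropLast) after invRev outside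
  simp only [FreeGroup.invRev, List.tail_reverse, List.reverse_reverse,
    ← List.map_dropLast, List.map_map]
  simp [Function.comp_def]

/-- Right multiplication by a generator: no-cancellation case. -/
lemma mul_gen_toWord_append {s : Fin r × Bool} {x : FG r}
    (h : x.toWord.getLast? ≠ some (invL s)) :
    (x * gen s).toWord = x.toWord ++ [s] := by
  have hkey : x * gen s = (gen (invL s) * x⁻¹)⁻¹ := by
    rw [mul_inv_rev, inv_inv, ← gen_inv, inv_inv]
  have hc : x⁻¹.toWord.head? ≠ some (invL (invL s)) := by
    rw [head?_toWord_inv]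
    intro hcon
    apply h
    rcases hl : x.toWord.getLast? with _ | a
    · rw [hl] at hcon; simp at hcon
    · rw [hl] at hcon
      simp only [Option.map_some, Option.some.injEq] at hcon
      have : a = invL s := by
        have := congrArg invL hcon
        simpa using this
      rw [this]
  rw [hkey, FreeGroup.toWord_inv, gen_mul_toWord_cons hc, FreeGroup.toWord_inv]
  simp only [FreeGroup.invRev, invL, List.reverse_reverse, List.map_reverse, List.map_map,
    List.reverse_cons]
  simp [Function.comp_def]

lemma norm_mul_gen_cancel {s : Fin r × Bool} {x : FG r}
    (h : x.toWord.getLast? = some (invL s)) :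
    (x * gen s).norm + 1 = x.norm := by
  rw [norm_eq_length, norm_eq_length, mul_gen_toWord_cancel h]
  rcases hw : x.toWord with _ | ⟨a, t⟩
  · rw [hw] at h; simp at h
  · simp

lemma norm_mul_gen_append {s : Fin r × Bool} {x : FG r}
    (h : x.toWord.getLast? ≠ some (invL s)) :
    (x * gen s).norm = x.norm + 1 := by
  rw [norm_eq_length, norm_eq_length, mul_gen_toWord_append h]
  simp




lemma head?_inv_iff {w : FG r} {s : Fin r × Bool} :
    w⁻¹.toWord.head? = some s ↔ w.toWord.getLast? = some (invL s) := by
  rw [head?_toWord_inv]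
  rcases hl : w.toWord.getLast? with _ | a
  · simp
  · simp only [Option.map_some, Option.some.injEq]
    constructor
    · intro hc
      rw [← hc]
      simp [invL]
    · intro hc
      rw [hc]
      simp

section Geometry

variable {s : Fin r × Bool} {g : FG r}

/-- membership in the `h`-side of the edge `g — h` (`h = gen s * g`):
`x` is strictly closer to `h` than to `g`. -/
def Dside (s : Fin r × Bool) (g : FG r) (x : FG r) : Prop :=
  ((gen s * g) * x⁻¹).toWord.head? ≠ some s

variable (hns : FreeGroup.norm (gen s * g) = FreeGroup.norm g + 1)
include hns

lemma head_g_ne : g.toWord.head? ≠ some (invL s) := by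
  intro hc
  have := norm_gen_mul_cancel hc
  omega

lemma toWord_h : (gen s * g).toWord = s :: g.toWord :=
  gen_mul_toWord_cons (head_g_ne hns)

omit hns

lemma xg_eq (x : FG r) : (x * (gen s * g)⁻¹) * gen s = x * g⁻¹ := by
  group

lemma normD {x : FG r} (hx : Dside s g x) :
    FreeGroup.norm (x * (gen s * g)⁻¹) + 1 = FreeGroup.norm (x * g⁻¹) := by
  have hinv : (x * (gen s * g)⁻¹)⁻¹ = (gen s * g) * x⁻¹ := by group
  have hlast : (x * (gen s * g)⁻¹).toWord.getLast? ≠ some (invL s) := by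
    intro hc
    apply hx
    rw [← hinv]
    exact head?_inv_iff.2 hc
  rw [← xg_eq (s := s) (g := g) x]
  exact (norm_mul_gen_append hlast).symm

lemma normDc {x : FG r} (hx : ¬ Dside s g x) :
    FreeGroup.norm (x * g⁻¹) + 1 = FreeGroup.norm (x * (gen s * g)⁻¹) := by
  have hinv : (x * (gen s * g)⁻¹)⁻¹ = (gen s * g) * x⁻¹ := by group
  rw [Dside, not_not] at hx
  have hlast : (x * (gen s * g)⁻¹).toWord.getLast? = some (invL s) := by
    rw [← head?_inv_iff, hinv]
    exact hx
  rw [← xg_eq (s := s) (g := g) x]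
  exact norm_mul_gen_cancel hlast

lemma claimA (hns : FreeGroup.norm (gen s * g) = FreeGroup.norm g + 1)
    {x y : FG r} (hxy : adjL x y) (hx : ¬ Dside s g x) (hy : Dside s g y) :
    x = g := by
  rw [Dside, not_not] at hx
  obtain ⟨t, ⟨p, rfl⟩, rfl⟩ := hxy
  set h := gen s * g with hh
  set u := h * x⁻¹ with hu
  have huy : h * (gen p * x)⁻¹ = u * gen (invL p) := by
    rw [hu, ← gen_inv]; group
  rcases hw : u.toWord with _ | ⟨a, u'⟩
  · rw [hw] at hx; simp at hx
  · have ha : a = s := by rw [hw] at hx; simpa using hx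
    rw [ha] at hw
    by_cases hc : u.toWord.getLast? = some (invL (invL p))
    · have := mul_gen_toWord_cancel hc
      rcases hu' : u' with _ | ⟨b, u''⟩
      · -- u = gen s, so x = g
        have hus : u = gen s := by
          rw [← FreeGroup.mk_toWord (x := u), hw, hu', ← gen_eq_mk]
        have : h * x⁻¹ = h * g⁻¹ := by
          rw [← hu, hus, hh]; group
        have := mul_left_cancel this
        exact inv_injective this
      · exfalso
        apply hy
        rw [huy, mul_gen_toWord_cancel hc, hw, hu']
        rw [List.dropLast_cons_of_ne_nil (by simp)]
        simp
    · exfalso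
      apply hy
      rw [huy, mul_gen_toWord_append hc, hw]
      simp

lemma crossing (hns : FreeGroup.norm (gen s * g) = FreeGroup.norm g + 1) :
    ∀ l : List (FG r), l.Chain' adjL → ∀ x y : FG r, l.head? = some x →
      l.getLast? = some y → ¬ Dside s g x → Dside s g y → g ∈ l := by
  intro l
  induction l with
  | nil => intro _ x y hx; simp at hx
  | cons a t ih =>
    intro hch x y hhead hlast hx hy
    have hax : a = x := by simpa using hhead
    subst hax
    rcases t with _ | ⟨b, t'⟩
    · simp only [List.getLast?_singleton, Option.some.injEq] at hlast
      subst hlast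
      exact absurd hy hx
    · have hadj : adjL a b := (List.isChain_cons_cons.1 hch).1
      by_cases hb : Dside s g b
      · have : a = g := claimA hns hadj hx hb
        rw [this]; exact List.mem_cons_self
      · have hmem : g ∈ b :: t' :=
          ih (List.isChain_cons_cons.1 hch).2 b y rfl
            (by rw [← hlast]; simp [List.getLast?_cons_cons]) hb hy
        exact List.mem_cons_of_mem a hmem

lemma mem_past_of_not_D (hns : FreeGroup.norm (gen s * g) = FreeGroup.norm g + 1)
    {f : FG r} (hf : ¬ Dside s g f) : f ∈ Past (gen s * g) g := by
  intro l hne hhead hlast hch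
  have hD : Dside s g (gen s * g) := by
    unfold Dside
    rw [mul_inv_cancel, FreeGroup.toWord_one]
    simp
  exact crossing hns l hch f (gen s * g) hhead hlast hf hD

lemma eq_of_D_of_norm_le (hns : FreeGroup.norm (gen s * g) = FreeGroup.norm g + 1)
    {f : FG r} (hf : Dside s g f)
    (hle : FreeGroup.norm f ≤ FreeGroup.norm (gen s * g)) : f = gen s * g := by
  set h := gen s * g with hh
  set w := f * h⁻¹ with hw
  have hfw : f = w * h := by rw [hw]; group
  have hwinv : w⁻¹ = h * f⁻¹ := by rw [hw]; group
  have hlast : w.toWord.getLast? ≠ some (invL s) := by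
    intro hc
    exact hf (hwinv ▸ head?_inv_iff.2 hc)
  have htw : (w * h).toWord = w.toWord ++ h.toWord := by
    have : w * h = FreeGroup.mk (w.toWord ++ h.toWord) := by
      conv_lhs => rw [← FreeGroup.mk_toWord (x := w), ← FreeGroup.mk_toWord (x := h)]
      rw [FreeGroup.mul_mk]
    rw [this]
    apply toWord_mk_of_reduced
    rw [Reduced, List.Chain', List.isChain_append]
    refine ⟨toWord_reduced w, toWord_reduced h, ?_⟩
    intro p hp q hq
    rw [hh, toWord_h hns] at hq
    simp only [List.head?_cons, Option.mem_def, Option.some.injEq] at hq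
    subst hq
    rintro ⟨h1, h2⟩
    apply hlast
    rw [Option.mem_def] at hp
    rw [hp]
    congr 1
    rcases p with ⟨p1, p2⟩
    simp only at h1 h2
    simp [invL, h1, h2]
  have hn : FreeGroup.norm f = FreeGroup.norm w + FreeGroup.norm h := by
    rw [hfw, norm_eq_length, htw, List.length_append]
    rfl
  have hw0 : FreeGroup.norm w = 0 := by omega
  have : w = 1 := FreeGroup.norm_eq_zero.1 hw0
  rw [hfw, this, one_mul]

lemma neighbor_eq (hns : FreeGroup.norm (gen s * g) = FreeGroup.norm g + 1)
    {t : Fin r × Bool}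
    (hn : FreeGroup.norm (gen t * (gen s * g)) ≤ FreeGroup.norm (gen s * g)) :
    gen t * (gen s * g) = g := by
  by_cases hc : (gen s * g).toWord.head? = some (invL t)
  · rw [toWord_h hns] at hc
    simp only [List.head?_cons, Option.some.injEq] at hc
    have hts : gen t = (gen s)⁻¹ := by
      rw [gen_inv, hc, invL_invL]
    rw [hts]
    group
  · have := norm_gen_mul_cons hc
    omega

end Geometry



lemma exists_parent {h : FG r} (hne : h ≠ 1) :
    ∃ (s : Fin r × Bool) (g : FG r), h = gen s * g ∧
      FreeGroup.norm h = FreeGroup.norm g + 1 := by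
  rcases hw : h.toWord with _ | ⟨a, m⟩
  · exact absurd (FreeGroup.toWord_eq_nil_iff.1 hw) hne
  · have hred := toWord_reduced h
    rw [hw] at hred
    have htg : (FreeGroup.mk m).toWord = m := toWord_mk_of_reduced hred.tail
    refine ⟨a, FreeGroup.mk m, ?_, ?_⟩
    · rw [gen_eq_mk, FreeGroup.mul_mk]
      rw [show ([a] ++ m : List (Fin r × Bool)) = a :: m from rfl, ← hw, FreeGroup.mk_toWord]
    · rw [norm_eq_length, norm_eq_length, hw, htg]
      simp
lemma mem_Sset {t : FG r} (ht : t ∈ Sset r) : ∃ p, t = gen p := by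
  rcases ht with ⟨p, rfl⟩; exact ⟨p, rfl⟩

/-- any `F`-neighbour of a maximal-norm element `h = gen s * g` equals `g`. -/
lemma neighbor_eq' {s : Fin r × Bool} {g : FG r}
    (hns : FreeGroup.norm (gen s * g) = FreeGroup.norm g + 1)
    {u : FG r} (hadj : adjL u (gen s * g) ∨ adjL (gen s * g) u)
    (hle : FreeGroup.norm u ≤ FreeGroup.norm (gen s * g)) : u = g := by
  rcases hadj with ⟨t, ht, heq⟩ | ⟨t, ht, heq⟩
  · obtain ⟨p, rfl⟩ := mem_Sset ht
    have hu : u = gen (invL p) * (gen s * g) := by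
      rw [heq, ← mul_assoc, ← gen_inv]
      group
    rw [hu] at hle ⊢
    exact neighbor_eq hns hle
  · obtain ⟨p, rfl⟩ := mem_Sset ht
    rw [heq] at hle ⊢
    exact neighbor_eq hns hle

section Surgery

variable {F : Finset (FG r)} {s : Fin r × Bool} {g h : FG r}

lemma parent_mem (hconn : LeftConnected (F : Set (FG r)))
    (hF : h ∈ F) (h1F : (1 : FG r) ∈ F) (hne : h ≠ 1)
    (hh : h = gen s * g) (hns : FreeGroup.norm (gen s * g) = FreeGroup.norm g + 1)
    (hmax : ∀ f ∈ F, FreeGroup.norm f ≤ FreeGroup.norm h) : g ∈ F := by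
  have hrtg := hconn h (by exact_mod_cast hF) 1 (by exact_mod_cast h1F)
  rcases (Relation.ReflTransGen.cases_head hrtg) with heq | ⟨c, ⟨_, hcF, hstep⟩, _⟩
  · exact absurd heq hne
  · have hcF' : c ∈ F := by exact_mod_cast hcF
    have : c = g := by
      apply neighbor_eq' hns
      · right
        rw [hh] at hstep
        exact hstep
      · rw [← hh]
        exact hmax c hcF'
    rwa [← this]

lemma erase_leftConnected (hconn : LeftConnected (F : Set (FG r)))
    (hF : h ∈ F) (hgF : g ∈ F)
    (hh : h = gen s * g) (hns : FreeGroup.norm (gen s * g) = FreeGroup.norm g + 1)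
    (hmax : ∀ f ∈ F, FreeGroup.norm f ≤ FreeGroup.norm h) :
    LeftConnected ((F.erase h : Finset (FG r)) : Set (FG r)) := by
  have hgh : g ≠ h := by
    intro hc
    have h2 : FreeGroup.norm h = FreeGroup.norm g + 1 := by rw [hh]; exact hns
    rw [hc] at h2
    omega
  -- any F-neighbour of h is g
  have hnbr : ∀ u ∈ F, (∃ t ∈ Sset r, h = t * u) ∨ (∃ t ∈ Sset r, u = t * h) → u = g := by
    intro u huF hadj
    apply neighbor_eq' hns (g := g)
    · rw [← hh]
      rcases hadj with h1 | h2
      · exact Or.inl ⟨h1.choose, h1.choose_spec⟩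
      · exact Or.inr ⟨h2.choose, h2.choose_spec⟩
    · rw [← hh]; exact hmax u huF
  set R := fun a b : FG r => a ∈ (F : Set (FG r)) ∧ b ∈ (F : Set (FG r)) ∧
    ∃ s' ∈ Sset r, b = s' * a with hR
  set R' := fun a b : FG r => a ∈ ((F.erase h : Finset (FG r)) : Set (FG r)) ∧
    b ∈ ((F.erase h : Finset (FG r)) : Set (FG r)) ∧ ∃ s' ∈ Sset r, b = s' * a with hR'
  have key : ∀ b : FG r, b ∈ F → b ≠ h → ∀ a : FG r, Relation.ReflTransGen R a b →
      (a ≠ h → Relation.ReflTransGen R' a b) ∧ (a = h → Relation.ReflTransGen R' g b) := by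
    intro b hbF hbh a hab
    induction hab using Relation.ReflTransGen.head_induction_on with
    | refl =>
      refine ⟨fun _ => Relation.ReflTransGen.refl, fun hc => absurd hc hbh⟩
    | @head a' c hst hrest ih =>
      obtain ⟨haF, hcF, t, htS, hteq⟩ := hst
      have haF' : a' ∈ F := by exact_mod_cast haF
      have hcF' : c ∈ F := by exact_mod_cast hcF
      constructor
      · intro hah
        by_cases hch : c = h
        · -- a' is an F-neighbour of h
          have : a' = g := hnbr a' haF' (Or.inl ⟨t, htS, by rw [← hch, hteq]⟩)
          subst this
          exact ih.2 hch
        · refine Relation.ReflTransGen.head ?_ (ih.1 hch)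
          refine ⟨?_, ?_, t, htS, hteq⟩
          · simp only [Finset.coe_erase, Set.mem_diff, Set.mem_singleton_iff]
            exact ⟨haF, hah⟩
          · simp only [Finset.coe_erase, Set.mem_diff, Set.mem_singleton_iff]
            exact ⟨hcF, hch⟩
      · intro hah
        -- a' = h, so c is an F-neighbour of h, c = g
        have hcg : c = g := hnbr c hcF' (Or.inr ⟨t, htS, by rw [hteq, hah]⟩)
        subst hcg
        exact ih.1 (by rintro rfl; exact hgh rfl)
  intro a ha b hb
  have haF : a ∈ F := Finset.mem_of_mem_erase (by exact_mod_cast ha)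
  have hbF : b ∈ F := Finset.mem_of_mem_erase (by exact_mod_cast hb)
  have hah : a ≠ h := Finset.ne_of_mem_erase (by exact_mod_cast ha)
  have hbh : b ≠ h := Finset.ne_of_mem_erase (by exact_mod_cast hb)
  have hab : Relation.ReflTransGen R a b :=
    hconn a (by exact_mod_cast haF) b (by exact_mod_cast hbF)
  exact (key b hbF hbh a hab).1 hah

end Surgery




open MeasureTheory in
lemma cyl_formula {r : ℕ} {K : Type*} [MeasurableSpace K]
    (ts : TransSys r K) (μ : Measure (FG r → K)) (hμ : IsInducedBy μ ts)
    (z : FG r → K) :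
    ∀ (n : ℕ) (F : Finset (FG r)), F.card ≤ n → LeftConnected (F : Set (FG r)) →
      (1 : FG r) ∈ F →
    μ {x | ∀ g ∈ F, x g = z g}
      = ENNReal.ofReal (ts.pi (z 1)) *
        ∏ e ∈ (F ×ˢ (Finset.univ : Finset (Fin r × Bool))).filter
            (fun e => gen e.2 * e.1 ∈ F ∧
              FreeGroup.norm (gen e.2 * e.1) = FreeGroup.norm e.1 + 1),
          ENNReal.ofReal (ts.P e.2 (z e.1) (z (gen e.2 * e.1))) := by
  classical
  intro n
  induction n with
  | zero =>
    intro F hcard _ h1F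
    exact absurd (Finset.card_pos.2 ⟨1, h1F⟩) (by omega)
  | succ n ihn =>
    intro F hcard hconn h1F
    obtain ⟨h, hhF, hmax⟩ := F.exists_max_image FreeGroup.norm ⟨1, h1F⟩
    by_cases hh1 : h = 1
    · -- base case : F = {1}
      have hFsub : F = {1} := by
        apply Finset.eq_singleton_iff_unique_mem.2
        refine ⟨h1F, fun x hx => ?_⟩
        have := hmax x hx
        rw [hh1, FreeGroup.norm_one] at this
        exact FreeGroup.norm_eq_zero.1 (by omega)
      subst hFsub
      have hset : {x : FG r → K | ∀ g ∈ ({1} : Finset (FG r)), x g = z g}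
          = {x | x 1 = z 1} := by
        ext x; simp
      have hfilt : (({1} : Finset (FG r)) ×ˢ (Finset.univ : Finset (Fin r × Bool))).filter
            (fun e => gen e.2 * e.1 ∈ ({1} : Finset (FG r)) ∧
              FreeGroup.norm (gen e.2 * e.1) = FreeGroup.norm e.1 + 1) = ∅ := by
        apply Finset.filter_false_of_mem
        intro e he
        rintro ⟨hmem, hnorm⟩
        have he1 : e.1 = 1 := by
          have := (Finset.mem_product.1 he).1
          simpa using this
        rw [he1, mul_one] at hmem
        have : gen e.2 = 1 := by simpa using hmem
        rw [he1, this] at hnorm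
        simp [FreeGroup.norm_one] at hnorm
      rw [hset, hμ.1, hfilt]
      simp
    · -- inductive step
      obtain ⟨s, g, hh, hnh⟩ := exists_parent hh1
      subst hh
      have hgF : g ∈ F := parent_mem hconn hhF h1F hh1 rfl hnh hmax
      set F' := F.erase (gen s * g) with hF'
      have h1F' : (1 : FG r) ∈ F' := Finset.mem_erase.2 ⟨fun hc => hh1 hc.symm, h1F⟩
      have hconn' : LeftConnected (F' : Set (FG r)) :=
        erase_leftConnected hconn hhF hgF rfl hnh hmax
      have hcard' : F'.card ≤ n := by
        have h1 : F'.card = F.card - 1 := Finset.card_erase_of_mem hhF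
        have h2 : 0 < F.card := Finset.card_pos.2 ⟨1, h1F⟩
        omega
      have IH := ihn F' hcard' hconn' h1F'
      have hgh : g ≠ gen s * g := by
        intro hc
        rw [← hc] at hnh
        omega
      -- enumeration of F'.erase g
      set F'' := F'.erase g with hF''
      set n₀ := F''.card with hn₀
      set eqv := F''.equivFin with heqv
      set fs : Fin n₀ → FG r := fun i => ((eqv.symm i : F'') : FG r) with hfs
      have hfs_mem : ∀ i, fs i ∈ F'' := fun i => (eqv.symm i).2
      have hfs_surj : ∀ u ∈ F'', ∃ i, fs i = u := by
        intro u hu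
        exact ⟨eqv ⟨u, hu⟩, by simp [hfs]⟩
      -- past membership
      have hpast : ∀ i, fs i ∈ Past (gen s * g) g ∧ fs i ≠ g := by
        intro i
        have hm := hfs_mem i
        have hne_g : fs i ≠ g := (Finset.mem_erase.1 hm).1
        have hmF' : fs i ∈ F' := (Finset.mem_erase.1 hm).2
        have hne_h : fs i ≠ gen s * g := (Finset.mem_erase.1 hmF').1
        have hmF : fs i ∈ F := (Finset.mem_erase.1 hmF').2
        refine ⟨?_, hne_g⟩
        apply mem_past_of_not_D hnh
        intro hD
        exact hne_h (eq_of_D_of_norm_le hnh hD (hmax _ hmF))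
      have hmeas := (hμ.2 s g hnh n₀ fs (fun i => z (fs i)) (z g) (z (gen s * g))) hpast
      -- set identities
      have E2 : {x : FG r → K | ∀ u ∈ F', x u = z u}
          = {x | x g = z g} ∩ ⋂ i, {x | x (fs i) = z (fs i)} := by
        ext x
        simp only [Set.mem_setOf_eq, Set.mem_inter_iff, Set.mem_iInter]
        constructor
        · intro hx
          exact ⟨hx g (Finset.mem_erase.2 ⟨hgh, hgF⟩),
            fun i => hx _ ((Finset.mem_erase.1 (hfs_mem i)).2)⟩
        · rintro ⟨hxg, hxi⟩ u hu
          by_cases hug : u = g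
          · rw [hug]; exact hxg
          · obtain ⟨i, rfl⟩ := hfs_surj u (Finset.mem_erase.2 ⟨hug, hu⟩)
            exact hxi i
      have E1 : {x : FG r → K | ∀ u ∈ F, x u = z u}
          = {x | x (gen s * g) = z (gen s * g)}
            ∩ ({x | x g = z g} ∩ ⋂ i, {x | x (fs i) = z (fs i)}) := by
        rw [← E2]
        ext x
        simp only [Set.mem_setOf_eq, Set.mem_inter_iff]
        constructor
        · intro hx
          exact ⟨hx _ hhF, fun u hu => hx u (Finset.mem_of_mem_erase hu)⟩
        · rintro ⟨hxh, hxF'⟩ u hu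
          by_cases huh : u = gen s * g
          · rw [huh]; exact hxh
          · exact hxF' u (Finset.mem_erase.2 ⟨huh, hu⟩)
      -- measure step
      have hstep : μ {x : FG r → K | ∀ u ∈ F, x u = z u}
          = ENNReal.ofReal (ts.P s (z g) (z (gen s * g)))
            * μ {x : FG r → K | ∀ u ∈ F', x u = z u} := by
        rw [E1, E2]
        exact hmeas.1
      -- edge set identity
      have hedge : (F ×ˢ (Finset.univ : Finset (Fin r × Bool))).filter
            (fun e => gen e.2 * e.1 ∈ F ∧
              FreeGroup.norm (gen e.2 * e.1) = FreeGroup.norm e.1 + 1)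
          = insert (g, s) ((F' ×ˢ (Finset.univ : Finset (Fin r × Bool))).filter
            (fun e => gen e.2 * e.1 ∈ F' ∧
              FreeGroup.norm (gen e.2 * e.1) = FreeGroup.norm e.1 + 1)) := by
        ext e
        simp only [Finset.mem_filter, Finset.mem_product, Finset.mem_univ, and_true,
          Finset.mem_insert]
        constructor
        · rintro ⟨he1, hmem, hnorm⟩
          by_cases hegs : e = (g, s)
          · exact Or.inl hegs
          · right
            have he1h : e.1 ≠ gen s * g := by
              intro hc
              have hle := hmax _ hmem
              rw [hc] at hnorm hle
              omega
            have hmemh : gen e.2 * e.1 ≠ gen s * g := by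
              intro hc
              have he1g : e.1 = g := by
                have heq : e.1 = gen (invL e.2) * (gen s * g) := by
                  rw [← hc, ← mul_assoc, ← gen_inv]
                  group
                have h2 : FreeGroup.norm (gen e.2 * e.1)
                    = FreeGroup.norm (gen s * g) := by rw [hc]
                have hle : FreeGroup.norm (gen (invL e.2) * (gen s * g))
                    ≤ FreeGroup.norm (gen s * g) := by
                  rw [← heq]
                  omega
                rw [heq]
                exact neighbor_eq hnh hle
              have hgen : gen e.2 = gen s := by
                have h3 : gen e.2 * e.1 = gen s * g := hc
                rw [he1g] at h3
                exact mul_right_cancel h3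
              have he2s : e.2 = s := gen_injective hgen
              exact hegs (Prod.ext he1g he2s)
            exact ⟨Finset.mem_erase.2 ⟨he1h, he1⟩, Finset.mem_erase.2 ⟨hmemh, hmem⟩, hnorm⟩
        · rintro (rfl | ⟨he1, hmem, hnorm⟩)
          · exact ⟨hgF, hhF, hnh⟩
          · exact ⟨Finset.mem_of_mem_erase he1, Finset.mem_of_mem_erase hmem, hnorm⟩
      have hnotmem : (g, s) ∉ ((F' ×ˢ (Finset.univ : Finset (Fin r × Bool))).filter
            (fun e => gen e.2 * e.1 ∈ F' ∧
              FreeGroup.norm (gen e.2 * e.1) = FreeGroup.norm e.1 + 1)) := by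
        intro hc
        have := (Finset.mem_filter.1 hc).2.1
        exact (Finset.mem_erase.1 this).1 rfl
      rw [hstep, IH, hedge, Finset.prod_insert hnotmem]
      ring

end CylinderAux

/-- the cylinder-set formula for a measure induced by an
invariant transition system: `μ(C) = π_{z(id)} ∏_{e∈E(F)} p_z(e)`. -/
theorem stmt_11 {r : ℕ} (hr : 1 ≤ r) {K : Type*} [MeasurableSpace K]
    [DiscreteMeasurableSpace K] [Countable K]
    (ts : TransSys r K) (hts : ts.IsInvariant)
    (μ : Measure (FG r → K)) [IsProbabilityMeasure μ] (hμ : IsInducedBy μ ts)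
    (F : Finset (FG r)) (hFconn : LeftConnected (F : Set (FG r)))
    (hFe : (1 : FG r) ∈ F) (z : FG r → K) :
    μ {x | ∀ g ∈ F, x g = z g}
      = ENNReal.ofReal (ts.pi (z 1)) *
        ∏ e ∈ (F ×ˢ (Finset.univ : Finset (Fin r × Bool))).filter
            (fun e => gen e.2 * e.1 ∈ F ∧
              FreeGroup.norm (gen e.2 * e.1) = FreeGroup.norm e.1 + 1),
          ENNReal.ofReal (ts.P e.2 (z e.1) (z (gen e.2 * e.1))) := by
  exact cyl_formula ts μ hμ z F.card F le_rfl hFconn hFe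

end

end Bowen
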